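/- Under the iterative Condorcet rule applied to the superman-kryptonite tournament on n players, player 1 wins with probability 1/2 − 1/(n(n−1)) and player n wins with probability 2/(n(n−1)). -/

import Mathlib

abbrev Tournament (n : ℕ) := Fin n → Fin n → Bool

def IsTournament {n : ℕ} (T : Tournament n) : Prop :=
  (∀ i, T i i = false) ∧ ∀ i j : Fin n, i ≠ j → T i j = !T j i

def CondorcetWinner {n : ℕ} (T : Tournament n) (i : Fin n) : Prop :=
  ∀ j, j ≠ i → T i j = true

def PairAdjacent {n : ℕ} (i j : Fin n) (T T' : Tournament n) : Prop :=
  ∀ a b : Fin n, ¬((a = i ∧ b = j) ∨ (a = j ∧ b = i)) → T a b = T' a b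

def SAdjacent {n : ℕ} (S : Finset (Fin n)) (T T' : Tournament n) : Prop :=
  ∀ a b : Fin n, (a ∉ S ∨ b ∉ S) → T a b = T' a b

def IsRule {n : ℕ} (r : Tournament n → Fin n → ℝ) : Prop :=
  ∀ T, IsTournament T → (∀ i, 0 ≤ r T i) ∧ (∑ i, r T i) = 1

def CondorcetConsistent {n : ℕ} (r : Tournament n → Fin n → ℝ) : Prop :=
  ∀ T, IsTournament T → ∀ i, CondorcetWinner T i → r T i = 1

def SNM2 {n : ℕ} (r : Tournament n → Fin n → ℝ) (α : ℝ) : Prop :=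
  ∀ T T' : Tournament n, IsTournament T → IsTournament T' →
    ∀ i j : Fin n, i ≠ j → PairAdjacent i j T T' →
      r T' i + r T' j - r T i - r T j ≤ α

def SNMk {n : ℕ} (k : ℕ) (r : Tournament n → Fin n → ℝ) (α : ℝ) : Prop :=
  ∀ S : Finset (Fin n), S.card ≤ k → ∀ T T' : Tournament n,
    IsTournament T → IsTournament T' → SAdjacent S T T' →
      (∑ i ∈ S, r T' i) - (∑ i ∈ S, r T i) ≤ α

def flipTo {n : ℕ} (i j : Fin n) (T : Tournament n) : Tournament n :=
  fun a b => if a = i ∧ b = j then true else if a = j ∧ b = i then false else T a b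

def winCount {n : ℕ} (T : Tournament n) (i : Fin n) : ℕ :=
  (Finset.univ.filter fun j => T i j = true).card

def cyclicT (m w : ℕ) : Tournament m :=
  fun i j => decide (1 ≤ (j.val + m - i.val) % m ∧ (j.val + m - i.val) % m ≤ w)

def skT (n : ℕ) : Tournament n :=
  fun i j =>
    if i.val = n - 1 ∧ j.val = 0 then true
    else if i.val = 0 ∧ j.val = n - 1 then false
    else decide (i.val < j.val)

def survivors {n : ℕ} (π : Equiv.Perm (Fin n)) (t : ℕ) : Finset (Fin n) :=
  Finset.univ.filter fun x => ∀ s : Fin n, s.val < t → π s ≠ x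

def CondorcetIn {n : ℕ} (T : Tournament n) (S : Finset (Fin n)) (i : Fin n) : Prop :=
  i ∈ S ∧ ∀ j ∈ S, j ≠ i → T i j = true

/-- Removing players π 0, π 1, ... in order, the outcome of the iterative Condorcet
rule is the Condorcet winner of the first surviving set that has one. -/
def ICOutcome {n : ℕ} (T : Tournament n) (π : Equiv.Perm (Fin n)) (i : Fin n) : Prop :=
  ∃ t : ℕ, CondorcetIn T (survivors π t) i ∧
    ∀ s < t, ¬ ∃ w, CondorcetIn T (survivors π s) w

open Classical in
noncomputable def icRule (n : ℕ) : Tournament n → Fin n → ℝ :=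
  fun T i =>
    ((Finset.univ.filter fun π : Equiv.Perm (Fin n) => ICOutcome T π i).card : ℝ) /
      (Nat.factorial n)

section SKHelpers

open Equiv Finset

variable {n : ℕ}

private lemma fin_ne' {i j : Fin n} (h : i.val ≠ j.val) : i ≠ j :=
  fun he => h (congrArg Fin.val he)

private lemma skT_true_iff (hn : 3 ≤ n) (i j : Fin n) :
    (skT n i j = true) ↔ (i.val = n-1 ∧ j.val = 0) ∨
      (¬(i.val = n-1 ∧ j.val = 0) ∧ ¬(i.val = 0 ∧ j.val = n-1) ∧ i.val < j.val) := by
  simp only [skT]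
  split_ifs with h1 h2 <;> simp <;> omega

private lemma no_winner (hn : 3 ≤ n) {z w m : Fin n} (hz : z.val = 0) (hw : w.val = n-1)
    (hm0 : m.val ≠ 0) (hm1 : m.val ≠ n-1) {S : Finset (Fin n)}
    (hzS : z ∈ S) (hwS : w ∈ S) (hmS : m ∈ S) : ¬ ∃ i, CondorcetIn (skT n) S i := by
  rintro ⟨i, hiS, hib⟩
  have him := m.isLt
  have hiw := w.isLt
  have hii := i.isLt
  by_cases hi0 : i.val = 0
  · have h := hib w hwS (fin_ne' (by omega))
    rw [skT_true_iff hn] at h; omega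
  · by_cases hi1 : i.val = n-1
    · have h := hib m hmS (fin_ne' (by omega))
      rw [skT_true_iff hn] at h; omega
    · have h := hib z hzS (fin_ne' (by omega))
      rw [skT_true_iff hn] at h; omega

private lemma condorcetIn_z (hn : 3 ≤ n) {z w : Fin n} (hz : z.val = 0) (hw : w.val = n-1)
    {S : Finset (Fin n)} (hzS : z ∈ S) (hwS : w ∉ S) : CondorcetIn (skT n) S z := by
  refine ⟨hzS, fun j hjS hjz => ?_⟩
  have hj0 : j.val ≠ 0 := fun h => hjz (Fin.ext (by omega))
  have hj1 : j.val ≠ n - 1 := fun h => hwS (by rwa [show j = w from Fin.ext (by omega)] at hjS)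
  have := j.isLt
  rw [skT_true_iff hn]; omega

private lemma condorcetIn_w (hn : 3 ≤ n) {z w : Fin n} (hz : z.val = 0) (hw : w.val = n-1)
    {S : Finset (Fin n)} (hwS : w ∈ S) (hall : ∀ x ∈ S, x = z ∨ x = w) :
    CondorcetIn (skT n) S w := by
  refine ⟨hwS, fun j hjS hjw => ?_⟩
  rcases hall j hjS with h | h
  · subst h; rw [skT_true_iff hn]; omega
  · exact absurd h hjw

private lemma condorcetIn_min (hn : 3 ≤ n) {z : Fin n} (hz : z.val = 0)
    {S : Finset (Fin n)} (hzS : z ∉ S) (hne : S.Nonempty) :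
    CondorcetIn (skT n) S (S.min' hne) := by
  refine ⟨S.min'_mem hne, fun j hjS hj => ?_⟩
  have h1 : (S.min' hne).val ≤ j.val := Fin.le_def.mp (S.min'_le j hjS)
  have h2 : j.val ≠ (S.min' hne).val := fun h => hj (Fin.ext h)
  have hj0 : j.val ≠ 0 := fun h => hzS (by rwa [show j = z from Fin.ext (by omega)] at hjS)
  have hm0 : (S.min' hne).val ≠ 0 := by
    intro h
    exact hzS ((show S.min' hne = z from Fin.ext (by omega)) ▸ S.min'_mem hne)
  have := j.isLt
  rw [skT_true_iff hn]; omega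

private lemma mem_survivors {π : Equiv.Perm (Fin n)} {t : ℕ} {x : Fin n} :
    x ∈ survivors π t ↔ t ≤ (π.symm x).val := by
  simp only [survivors, Finset.mem_filter, Finset.mem_univ, true_and]
  constructor
  · intro h
    by_contra hlt
    exact h (π.symm x) (by omega) (π.apply_symm_apply x)
  · intro h s hs hsx
    have hss : s = π.symm x := by rw [← hsx, Equiv.symm_apply_apply]
    rw [hss] at hs; omega

end SKHelpers

section SKOutcome

open Equiv Finset

variable {n : ℕ}

private lemma symm_val_ne {π : Equiv.Perm (Fin n)} {a b : Fin n} (h : a ≠ b) :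
    (π.symm a).val ≠ (π.symm b).val :=
  fun he => h (π.symm.injective (Fin.ext he))

private lemma outcome_z (hn : 3 ≤ n) {z w : Fin n} (hz : z.val = 0) (hw : w.val = n-1)
    (π : Equiv.Perm (Fin n))
    (h1 : (π.symm w).val < (π.symm z).val)
    (h2 : ∃ m : Fin n, m.val ≠ 0 ∧ m.val ≠ n-1 ∧ (π.symm w).val < (π.symm m).val) :
    ICOutcome (skT n) π z := by
  obtain ⟨m, hm0, hm1, hm⟩ := h2
  refine ⟨(π.symm w).val + 1, ?_, ?_⟩
  · refine condorcetIn_z hn hz hw (mem_survivors.mpr (by omega)) ?_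
    intro hws
    have := mem_survivors.mp hws; omega
  · intro s hs
    exact no_winner hn hz hw hm0 hm1 (mem_survivors.mpr (by omega))
      (mem_survivors.mpr (by omega)) (mem_survivors.mpr (by omega))

private lemma outcome_w (hn : 3 ≤ n) {z w : Fin n} (hz : z.val = 0) (hw : w.val = n-1)
    (π : Equiv.Perm (Fin n))
    (hM : ∀ m : Fin n, m.val ≠ 0 → m.val ≠ n-1 →
      (π.symm m).val < (π.symm w).val ∧ (π.symm m).val < (π.symm z).val) :
    ICOutcome (skT n) π w := by
  set t := min (π.symm z).val (π.symm w).val with ht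
  have hm1 := hM ⟨1, by omega⟩ (by simp) (by simp; omega)
  have ht1 : 1 ≤ t := by omega
  have htz : t ≤ (π.symm z).val := by omega
  have htn : t - 1 < n := by have := (π.symm z).isLt; omega
  refine ⟨t, ?_, ?_⟩
  · refine condorcetIn_w hn hz hw (mem_survivors.mpr (by omega)) ?_
    intro x hx
    have hxs := mem_survivors.mp hx
    by_cases hx0 : x.val = 0
    · exact Or.inl (Fin.ext (by omega))
    · by_cases hx1 : x.val = n-1
      · exact Or.inr (Fin.ext (by omega))
      · have := hM x hx0 hx1; omega
  · intro s hs
    set x := π ⟨t - 1, htn⟩ with hx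
    have hxval : (π.symm x).val = t - 1 := by rw [hx, Equiv.symm_apply_apply]
    have hx0 : x.val ≠ 0 := by
      intro h
      have : x = z := Fin.ext (by omega)
      rw [this] at hxval; omega
    have hx1 : x.val ≠ n - 1 := by
      intro h
      have : x = w := Fin.ext (by omega)
      rw [this] at hxval; omega
    exact no_winner hn hz hw hx0 hx1 (mem_survivors.mpr (by omega))
      (mem_survivors.mpr (by omega)) (mem_survivors.mpr (by omega))

private lemma outcome_mid (hn : 3 ≤ n) {z w : Fin n} (hz : z.val = 0) (hw : w.val = n-1)
    (π : Equiv.Perm (Fin n)) (h1 : (π.symm z).val < (π.symm w).val)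
    (h2 : ∃ m : Fin n, m.val ≠ 0 ∧ m.val ≠ n-1 ∧ (π.symm z).val < (π.symm m).val) :
    ∃ i : Fin n, i ≠ z ∧ i ≠ w ∧ ICOutcome (skT n) π i := by
  obtain ⟨m, hm0, hm1, hm⟩ := h2
  set t := (π.symm z).val + 1 with htdef
  have hmS : m ∈ survivors π t := mem_survivors.mpr (by omega)
  have hne : (survivors π t).Nonempty := ⟨m, hmS⟩
  have hzS : z ∉ survivors π t := fun h => by have := mem_survivors.mp h; omega
  refine ⟨(survivors π t).min' hne, ?_, ?_, t, condorcetIn_min hn hz hzS hne, ?_⟩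
  · intro h; exact hzS (h ▸ (survivors π t).min'_mem hne)
  · intro h
    have hle := Fin.le_def.mp (Finset.min'_le _ m hmS)
    rw [h] at hle
    have := m.isLt
    omega
  · intro s hs
    exact no_winner hn hz hw hm0 hm1 (mem_survivors.mpr (by omega))
      (mem_survivors.mpr (by omega)) (mem_survivors.mpr (by omega))

private lemma outcome_unique (hn : 3 ≤ n) {π : Equiv.Perm (Fin n)} {i j : Fin n}
    (hi : ICOutcome (skT n) π i) (hj : ICOutcome (skT n) π j) : i = j := by
  obtain ⟨t, hti, htim⟩ := hi
  obtain ⟨s, hsj, hsjm⟩ := hj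
  have hts : t = s := by
    by_contra h
    rcases Nat.lt_or_ge t s with h' | h'
    · exact hsjm t h' ⟨i, hti⟩
    · exact htim s (by omega) ⟨j, hsj⟩
  subst hts
  by_contra hij
  have h1 := hti.2 j hsj.1 (fun h => hij h.symm)
  have h2 := hsj.2 i hti.1 hij
  rw [skT_true_iff hn] at h1 h2
  have hiv : i.val ≠ j.val := fun h => hij (Fin.ext h)
  have := i.isLt
  have := j.isLt
  omega

private lemma trichotomy (hn : 3 ≤ n) {z w : Fin n} (hz : z.val = 0) (hw : w.val = n-1)
    (π : Equiv.Perm (Fin n)) :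
    ((π.symm w).val < (π.symm z).val ∧
      ∃ m : Fin n, m.val ≠ 0 ∧ m.val ≠ n-1 ∧ (π.symm w).val < (π.symm m).val) ∨
    (∀ m : Fin n, m.val ≠ 0 → m.val ≠ n-1 →
      (π.symm m).val < (π.symm w).val ∧ (π.symm m).val < (π.symm z).val) ∨
    ((π.symm z).val < (π.symm w).val ∧
      ∃ m : Fin n, m.val ≠ 0 ∧ m.val ≠ n-1 ∧ (π.symm z).val < (π.symm m).val) := by
  have hzw : (π.symm z).val ≠ (π.symm w).val := symm_val_ne (fin_ne' (by omega))
  by_cases hc : ∀ m : Fin n, m.val ≠ 0 → m.val ≠ n-1 →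
      (π.symm m).val < (π.symm w).val ∧ (π.symm m).val < (π.symm z).val
  · exact Or.inr (Or.inl hc)
  · push_neg at hc
    obtain ⟨m, hm0, hm1, hm⟩ := hc
    have hmz : (π.symm m).val ≠ (π.symm z).val := symm_val_ne (fin_ne' (by omega))
    have hmw : (π.symm m).val ≠ (π.symm w).val := symm_val_ne (fin_ne' (by omega))
    rcases Nat.lt_or_ge (π.symm w).val (π.symm z).val with h | h
    · exact Or.inl ⟨h, m, hm0, hm1, by omega⟩
    · exact Or.inr (Or.inr ⟨by omega, m, hm0, hm1, by omega⟩)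

private lemma outcome_z_iff (hn : 3 ≤ n) {z w : Fin n} (hz : z.val = 0) (hw : w.val = n-1)
    (π : Equiv.Perm (Fin n)) :
    ICOutcome (skT n) π z ↔ ((π.symm w).val < (π.symm z).val ∧
      ∃ m : Fin n, m.val ≠ 0 ∧ m.val ≠ n-1 ∧ (π.symm w).val < (π.symm m).val) := by
  constructor
  · intro h
    rcases trichotomy hn hz hw π with hc | hc | hc
    · exact hc
    · have := outcome_unique hn h (outcome_w hn hz hw π hc)
      rw [this] at hz; omega
    · obtain ⟨i, hiz, _, hio⟩ := outcome_mid hn hz hw π hc.1 hc.2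
      exact absurd (outcome_unique hn h hio).symm hiz
  · intro h
    exact outcome_z hn hz hw π h.1 h.2

private lemma outcome_w_iff (hn : 3 ≤ n) {z w : Fin n} (hz : z.val = 0) (hw : w.val = n-1)
    (π : Equiv.Perm (Fin n)) :
    ICOutcome (skT n) π w ↔ (∀ m : Fin n, m.val ≠ 0 → m.val ≠ n-1 →
      (π.symm m).val < (π.symm w).val ∧ (π.symm m).val < (π.symm z).val) := by
  constructor
  · intro h
    rcases trichotomy hn hz hw π with hc | hc | hc
    · have h2 := congrArg Fin.val (outcome_unique hn h (outcome_z hn hz hw π hc.1 hc.2))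
      omega
    · exact hc
    · obtain ⟨i, _, hiw, hio⟩ := outcome_mid hn hz hw π hc.1 hc.2
      exact absurd (outcome_unique hn h hio).symm hiw
  · intro h
    exact outcome_w hn hz hw π h

end SKOutcome

section SKPair

open Equiv Finset

variable {n : ℕ}

private lemma exists_mid_at (hn : 3 ≤ n) {z w : Fin n} (hz : z.val = 0) (hw : w.val = n-1)
    (π : Equiv.Perm (Fin n)) {v : ℕ} (hv : v < n)
    (hvz : v ≠ (π.symm z).val) (hvw : v ≠ (π.symm w).val) :
    ∃ m : Fin n, m.val ≠ 0 ∧ m.val ≠ n-1 ∧ (π.symm m).val = v := by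
  refine ⟨π ⟨v, hv⟩, ?_, ?_, by rw [Equiv.symm_apply_apply]⟩
  · intro h
    have : π ⟨v, hv⟩ = z := Fin.ext (by omega)
    apply hvz
    rw [← this, Equiv.symm_apply_apply]
  · intro h
    have : π ⟨v, hv⟩ = w := Fin.ext (by omega)
    apply hvw
    rw [← this, Equiv.symm_apply_apply]

private lemma outcome_z_iff' (hn : 3 ≤ n) {z w : Fin n} (hz : z.val = 0) (hw : w.val = n-1)
    (π : Equiv.Perm (Fin n)) :
    ICOutcome (skT n) π z ↔ ((π.symm w).val < (π.symm z).val ∧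
      ¬((π.symm z).val = n-1 ∧ (π.symm w).val = n-2)) := by
  rw [outcome_z_iff hn hz hw π]
  have hzlt := (π.symm z).isLt
  have hwlt := (π.symm w).isLt
  have hzw : (π.symm z).val ≠ (π.symm w).val := symm_val_ne (fin_ne' (by omega))
  constructor
  · rintro ⟨h1, m, hm0, hm1, hm⟩
    refine ⟨h1, ?_⟩
    rintro ⟨he1, he2⟩
    have hmz : (π.symm m).val ≠ (π.symm z).val := symm_val_ne (fin_ne' (by omega))
    have hmlt := (π.symm m).isLt
    omega
  · rintro ⟨h1, h2⟩
    refine ⟨h1, ?_⟩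
    by_cases hc : (π.symm z).val = n-1
    · obtain ⟨m, hm0, hm1, hm⟩ := exists_mid_at hn hz hw π (v := n-2)
        (by omega) (by omega) (by omega)
      exact ⟨m, hm0, hm1, by omega⟩
    · obtain ⟨m, hm0, hm1, hm⟩ := exists_mid_at hn hz hw π (v := n-1)
        (by omega) (by omega) (by omega)
      exact ⟨m, hm0, hm1, by omega⟩

private lemma outcome_w_iff' (hn : 3 ≤ n) {z w : Fin n} (hz : z.val = 0) (hw : w.val = n-1)
    (π : Equiv.Perm (Fin n)) :
    ICOutcome (skT n) π w ↔ (n-2 ≤ (π.symm z).val ∧ n-2 ≤ (π.symm w).val) := by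
  rw [outcome_w_iff hn hz hw π]
  have hzlt := (π.symm z).isLt
  have hwlt := (π.symm w).isLt
  have hzw : (π.symm z).val ≠ (π.symm w).val := symm_val_ne (fin_ne' (by omega))
  constructor
  · intro h
    by_contra hc
    rcases Nat.lt_or_ge (π.symm z).val (n-2) with h' | h'
    case inl =>
      -- some middle has position ≥ n-2 > π.symm z, contradiction... find it among positions n-2, n-1
      obtain ⟨m, hm0, hm1, hm⟩ : ∃ m : Fin n, m.val ≠ 0 ∧ m.val ≠ n-1 ∧
          n-2 ≤ (π.symm m).val := by
        by_cases hc1 : (n:ℕ)-2 = (π.symm w).val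
        · obtain ⟨m, hm0, hm1, hm⟩ := exists_mid_at hn hz hw π (v := n-1)
            (by omega) (by omega) (by omega)
          exact ⟨m, hm0, hm1, by omega⟩
        · obtain ⟨m, hm0, hm1, hm⟩ := exists_mid_at hn hz hw π (v := n-2)
            (by omega) (by omega) (by omega)
          exact ⟨m, hm0, hm1, by omega⟩
      have := h m hm0 hm1
      omega
    case inr =>
      have hw' : (π.symm w).val < n-2 := by omega
      obtain ⟨m, hm0, hm1, hm⟩ : ∃ m : Fin n, m.val ≠ 0 ∧ m.val ≠ n-1 ∧
          n-2 ≤ (π.symm m).val := by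
        by_cases hc1 : (n:ℕ)-2 = (π.symm z).val
        · obtain ⟨m, hm0, hm1, hm⟩ := exists_mid_at hn hz hw π (v := n-1)
            (by omega) (by omega) (by omega)
          exact ⟨m, hm0, hm1, by omega⟩
        · obtain ⟨m, hm0, hm1, hm⟩ := exists_mid_at hn hz hw π (v := n-2)
            (by omega) (by omega) (by omega)
          exact ⟨m, hm0, hm1, by omega⟩
      have := h m hm0 hm1
      omega
  · intro h m hm0 hm1
    have hmz : (π.symm m).val ≠ (π.symm z).val := symm_val_ne (fin_ne' (by omega))
    have hmw : (π.symm m).val ≠ (π.symm w).val := symm_val_ne (fin_ne' (by omega))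
    have hmlt := (π.symm m).isLt
    omega

end SKPair

section SKCount

open Equiv Finset

variable {n : ℕ}

private lemma card_fix2 (hn : 3 ≤ n) {a b x y : Fin n} (hab : a ≠ b) (hxy : x ≠ y) :
    (Finset.univ.filter fun σ : Equiv.Perm (Fin n) => σ a = x ∧ σ b = y).card =
      Nat.factorial (n - 2) := by
  classical
  set d : Fin n := Equiv.swap a x b with hd_def
  have hdx : d ≠ x := by
    rcases eq_or_ne b x with h | h
    · have hda : d = a := by rw [hd_def, h, Equiv.swap_apply_right]
      rw [hda]; exact fun h2 => hab (h2.trans h.symm)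
    · have hdb : d = b := by rw [hd_def, Equiv.swap_apply_of_ne_of_ne hab.symm h]
      rw [hdb]; exact h
  set g : Equiv.Perm (Fin n) := (Equiv.swap a x).trans (Equiv.swap d y) with hg_def
  have hga : g a = x := by
    show Equiv.swap d y (Equiv.swap a x a) = x
    rw [Equiv.swap_apply_left, Equiv.swap_apply_of_ne_of_ne (Ne.symm hdx) hxy]
  have hgb : g b = y := by
    show Equiv.swap d y (Equiv.swap a x b) = y
    rw [← hd_def, Equiv.swap_apply_left]
  have hsx : g.symm x = a := by rw [← hga, Equiv.symm_apply_apply]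
  have hsy : g.symm y = b := by rw [← hgb, Equiv.symm_apply_apply]
  have hcard : (Finset.univ.filter fun σ : Equiv.Perm (Fin n) => σ a = x ∧ σ b = y).card =
      (Finset.univ.filter fun τ : Equiv.Perm (Fin n) => τ a = a ∧ τ b = b).card := by
    refine Finset.card_nbij' (fun σ => σ.trans g.symm) (fun τ => τ.trans g) ?_ ?_ ?_ ?_
    · intro σ hσ
      simp only [Finset.mem_coe, mem_filter, mem_univ, true_and, Equiv.trans_apply] at hσ ⊢
      rw [hσ.1, hσ.2, hsx, hsy]; exact ⟨rfl, rfl⟩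
    · intro τ hτ
      simp only [Finset.mem_coe, mem_filter, mem_univ, true_and, Equiv.trans_apply] at hτ ⊢
      rw [hτ.1, hτ.2, hga, hgb]; exact ⟨rfl, rfl⟩
    · intro σ _
      exact Equiv.ext fun p => by simp
    · intro τ _
      exact Equiv.ext fun p => by simp
  rw [hcard]
  have hset : (Finset.univ.filter fun τ : Equiv.Perm (Fin n) => τ a = a ∧ τ b = b) =
      (Finset.univ.filter fun τ : Equiv.Perm (Fin n) =>
        ∀ v : Fin n, ¬(v ≠ a ∧ v ≠ b) → τ v = v) := by
    ext τ
    simp only [mem_filter, mem_univ, true_and]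
    constructor
    · rintro ⟨h1, h2⟩ v hv
      rcases not_and_or.mp hv with h | h <;> rw [not_ne_iff.mp h] <;> assumption
    · intro h
      exact ⟨h a (by simp), h b (by simp)⟩
  rw [hset]
  have h1 : (Finset.univ.filter fun τ : Equiv.Perm (Fin n) =>
      ∀ v : Fin n, ¬(v ≠ a ∧ v ≠ b) → τ v = v).card =
      Fintype.card {f : Equiv.Perm (Fin n) // ∀ v, ¬(v ≠ a ∧ v ≠ b) → f v = v} := by
    rw [Fintype.card_subtype]
  rw [h1, Fintype.card_congr
    (Equiv.Perm.subtypeEquivSubtypePerm (fun v : Fin n => v ≠ a ∧ v ≠ b)).symm,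
    Fintype.card_perm]
  congr 1
  rw [Fintype.card_subtype]
  have hset2 : (Finset.univ.filter fun v : Fin n => v ≠ a ∧ v ≠ b) =
      Finset.univ \ {a, b} := by
    ext v
    simp only [mem_filter, mem_univ, true_and, mem_sdiff, mem_insert, mem_singleton]
    tauto
  rw [show ({v | v ≠ a ∧ v ≠ b} : Finset (Fin n)) = Finset.univ \ {a, b} from hset2,
    Finset.card_sdiff_of_subset (Finset.subset_univ _), Finset.card_univ, Fintype.card_fin,
    Finset.card_pair hab]

private lemma card_half (hn : 3 ≤ n) {z w : Fin n} (hzw : z ≠ w) :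
    2 * (Finset.univ.filter fun σ : Equiv.Perm (Fin n) => (σ w).val < (σ z).val).card =
      Nat.factorial n := by
  classical
  have hAA' : (Finset.univ.filter fun σ : Equiv.Perm (Fin n) => (σ w).val < (σ z).val).card =
      (Finset.univ.filter fun σ : Equiv.Perm (Fin n) => (σ z).val < (σ w).val).card := by
    refine Finset.card_nbij' (fun σ => (Equiv.swap z w).trans σ)
      (fun σ => (Equiv.swap z w).trans σ) ?_ ?_ ?_ ?_
    · intro σ hσ
      simp only [Finset.mem_coe, mem_filter, mem_univ, true_and, Equiv.trans_apply,
        Equiv.swap_apply_left, Equiv.swap_apply_right] at hσ ⊢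
      exact hσ
    · intro σ hσ
      simp only [Finset.mem_coe, mem_filter, mem_univ, true_and, Equiv.trans_apply,
        Equiv.swap_apply_left, Equiv.swap_apply_right] at hσ ⊢
      exact hσ
    · intro σ _
      exact Equiv.ext fun p => by simp [Equiv.swap_apply_self]
    · intro σ _
      exact Equiv.ext fun p => by simp [Equiv.swap_apply_self]
  have hcongr : (Finset.univ.filter fun σ : Equiv.Perm (Fin n) => ¬ ((σ w).val < (σ z).val)) =
      (Finset.univ.filter fun σ : Equiv.Perm (Fin n) => (σ z).val < (σ w).val) := by
    apply Finset.filter_congr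
    intro σ _
    have : (σ z).val ≠ (σ w).val := fun h => hzw (σ.injective (Fin.ext h))
    constructor
    · intro h; omega
    · intro h; omega
  have key := Finset.card_filter_add_card_filter_not
    (s := (Finset.univ : Finset (Equiv.Perm (Fin n))))
    (fun σ : Equiv.Perm (Fin n) => (σ w).val < (σ z).val)
  rw [Finset.card_univ, Fintype.card_perm, Fintype.card_fin, hcongr, ← hAA'] at key
  omega

end SKCount

section SKFinal

open Equiv Finset

variable {n : ℕ}

open Classical in
private lemma count_z_final (hn : 3 ≤ n) {z w : Fin n} (hz : z.val = 0) (hw : w.val = n-1) :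
    2 * (Finset.univ.filter fun π : Equiv.Perm (Fin n) => ICOutcome (skT n) π z).card
      + 2 * Nat.factorial (n-2) = Nat.factorial n := by
  have hzw : z ≠ w := fin_ne' (by omega)
  have h1 : (Finset.univ.filter fun π : Equiv.Perm (Fin n) => ICOutcome (skT n) π z).card =
      (Finset.univ.filter fun σ : Equiv.Perm (Fin n) =>
        (σ w).val < (σ z).val ∧ ¬((σ z).val = n-1 ∧ (σ w).val = n-2)).card := by
    refine Finset.card_nbij' (fun π => π.symm) (fun σ => σ.symm)
      ?_ ?_ (fun π _ => Equiv.symm_symm π) (fun σ _ => Equiv.symm_symm σ)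
    · intro π hπ
      simp only [Finset.mem_coe, mem_filter, mem_univ, true_and] at hπ ⊢
      exact (outcome_z_iff' hn hz hw π).mp hπ
    · intro σ hσ
      simp only [Finset.mem_coe, mem_filter, mem_univ, true_and] at hσ ⊢
      rw [outcome_z_iff' hn hz hw σ.symm, Equiv.symm_symm]
      exact hσ
  have hBeq : (Finset.univ.filter fun σ : Equiv.Perm (Fin n) =>
      (σ z).val = n-1 ∧ (σ w).val = n-2) =
      (Finset.univ.filter fun σ : Equiv.Perm (Fin n) =>
        σ z = (⟨n-1, by omega⟩ : Fin n) ∧ σ w = (⟨n-2, by omega⟩ : Fin n)) := by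
    ext σ
    simp [Fin.ext_iff]
  have hQ1eq : (Finset.univ.filter fun σ : Equiv.Perm (Fin n) =>
      (σ w).val < (σ z).val ∧ ¬((σ z).val = n-1 ∧ (σ w).val = n-2)) =
      (Finset.univ.filter fun σ : Equiv.Perm (Fin n) => (σ w).val < (σ z).val) \
      (Finset.univ.filter fun σ : Equiv.Perm (Fin n) =>
        (σ z).val = n-1 ∧ (σ w).val = n-2) := by
    ext σ
    simp only [mem_filter, mem_univ, true_and, mem_sdiff]
  have hsub : (Finset.univ.filter fun σ : Equiv.Perm (Fin n) =>
      (σ z).val = n-1 ∧ (σ w).val = n-2) ⊆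
      (Finset.univ.filter fun σ : Equiv.Perm (Fin n) => (σ w).val < (σ z).val) := by
    intro σ h
    simp only [mem_filter, mem_univ, true_and] at h ⊢
    omega
  have hB : (Finset.univ.filter fun σ : Equiv.Perm (Fin n) =>
      (σ z).val = n-1 ∧ (σ w).val = n-2).card = Nat.factorial (n-2) := by
    rw [hBeq]
    exact card_fix2 hn hzw (fin_ne' (by simp; omega))
  have hle := Finset.card_le_card hsub
  have hA := card_half hn hzw
  rw [h1, hQ1eq, Finset.card_sdiff_of_subset hsub, hB]
  omega

open Classical in
private lemma count_w_final (hn : 3 ≤ n) {z w : Fin n} (hz : z.val = 0) (hw : w.val = n-1) :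
    (Finset.univ.filter fun π : Equiv.Perm (Fin n) => ICOutcome (skT n) π w).card =
      2 * Nat.factorial (n-2) := by
  have hzw : z ≠ w := fin_ne' (by omega)
  have h1 : (Finset.univ.filter fun π : Equiv.Perm (Fin n) => ICOutcome (skT n) π w).card =
      (Finset.univ.filter fun σ : Equiv.Perm (Fin n) =>
        n-2 ≤ (σ z).val ∧ n-2 ≤ (σ w).val).card := by
    refine Finset.card_nbij' (fun π => π.symm) (fun σ => σ.symm)
      ?_ ?_ (fun π _ => Equiv.symm_symm π) (fun σ _ => Equiv.symm_symm σ)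
    · intro π hπ
      simp only [Finset.mem_coe, mem_filter, mem_univ, true_and] at hπ ⊢
      exact (outcome_w_iff' hn hz hw π).mp hπ
    · intro σ hσ
      simp only [Finset.mem_coe, mem_filter, mem_univ, true_and] at hσ ⊢
      rw [outcome_w_iff' hn hz hw σ.symm, Equiv.symm_symm]
      exact hσ
  have hsplit : (Finset.univ.filter fun σ : Equiv.Perm (Fin n) =>
      n-2 ≤ (σ z).val ∧ n-2 ≤ (σ w).val) =
      (Finset.univ.filter fun σ : Equiv.Perm (Fin n) =>
        σ z = (⟨n-2, by omega⟩ : Fin n) ∧ σ w = (⟨n-1, by omega⟩ : Fin n)) ∪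
      (Finset.univ.filter fun σ : Equiv.Perm (Fin n) =>
        σ z = (⟨n-1, by omega⟩ : Fin n) ∧ σ w = (⟨n-2, by omega⟩ : Fin n)) := by
    ext σ
    have h1 := (σ z).isLt
    have h2 := (σ w).isLt
    have hne : (σ z).val ≠ (σ w).val := fun h => hzw (σ.injective (Fin.ext h))
    simp only [mem_filter, mem_univ, true_and, mem_union, Fin.ext_iff]
    omega
  have hdisj : Disjoint
      (Finset.univ.filter fun σ : Equiv.Perm (Fin n) =>
        σ z = (⟨n-2, by omega⟩ : Fin n) ∧ σ w = (⟨n-1, by omega⟩ : Fin n))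
      (Finset.univ.filter fun σ : Equiv.Perm (Fin n) =>
        σ z = (⟨n-1, by omega⟩ : Fin n) ∧ σ w = (⟨n-2, by omega⟩ : Fin n)) := by
    rw [Finset.disjoint_left]
    intro σ ha hb
    simp only [mem_filter, mem_univ, true_and, Fin.ext_iff] at ha hb
    omega
  rw [h1, hsplit, Finset.card_union_of_disjoint hdisj,
    card_fix2 hn hzw (fin_ne' (by simp; omega)),
    card_fix2 hn hzw (fin_ne' (by simp; omega))]
  omega

private lemma fact_split (hn : 3 ≤ n) :
    Nat.factorial n = n * (n-1) * Nat.factorial (n-2) := by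
  obtain ⟨m, rfl⟩ : ∃ m, n = m + 3 := ⟨n - 3, by omega⟩
  show (m+3).factorial = (m+3) * (m+2) * (m+1).factorial
  rw [Nat.factorial_succ, Nat.factorial_succ]
  ring

open Classical in
private lemma final_z (hn : 3 ≤ n) {z w : Fin n} (hz : z.val = 0) (hw : w.val = n-1) :
    icRule n (skT n) z = 1/2 - 1/((n:ℝ) * ((n:ℝ) - 1)) := by
  have key := count_z_final hn hz hw
  have hfact := fact_split hn
  simp only [icRule]
  set c := (Finset.univ.filter fun π : Equiv.Perm (Fin n) => ICOutcome (skT n) π z).card with hc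
  have hkey : 2*(c:ℝ) + 2*((Nat.factorial (n-2) : ℕ) : ℝ) = ((Nat.factorial n : ℕ) : ℝ) := by
    exact_mod_cast key
  have hfR : ((Nat.factorial n : ℕ) : ℝ) = (n:ℝ) * ((n:ℝ)-1) * ((Nat.factorial (n-2) : ℕ) : ℝ) := by
    rw [hfact]
    push_cast [Nat.cast_sub (by omega : 1 ≤ n)]
    ring
  have hF0 : (0:ℝ) < ((Nat.factorial (n-2) : ℕ) : ℝ) := by
    exact_mod_cast (n-2).factorial_pos
  have hn3 : (3:ℝ) ≤ (n:ℝ) := by exact_mod_cast hn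
  have hcval : (c:ℝ) = ((Nat.factorial n : ℕ) : ℝ)/2 - ((Nat.factorial (n-2) : ℕ) : ℝ) := by
    linarith
  rw [hcval, hfR]
  have h1 : (n:ℝ) ≠ 0 := by linarith
  have h2 : (n:ℝ) - 1 ≠ 0 := by linarith
  have h3 : ((Nat.factorial (n-2) : ℕ) : ℝ) ≠ 0 := by linarith
  field_simp

open Classical in
private lemma final_w (hn : 3 ≤ n) {z w : Fin n} (hz : z.val = 0) (hw : w.val = n-1) :
    icRule n (skT n) w = 2/((n:ℝ) * ((n:ℝ) - 1)) := by
  have key := count_w_final hn hz hw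
  have hfact := fact_split hn
  simp only [icRule]
  rw [key]
  have hfR : ((Nat.factorial n : ℕ) : ℝ) = (n:ℝ) * ((n:ℝ)-1) * ((Nat.factorial (n-2) : ℕ) : ℝ) := by
    rw [hfact]
    push_cast [Nat.cast_sub (by omega : 1 ≤ n)]
    ring
  have hF0 : (0:ℝ) < ((Nat.factorial (n-2) : ℕ) : ℝ) := by
    exact_mod_cast (n-2).factorial_pos
  have hn3 : (3:ℝ) ≤ (n:ℝ) := by exact_mod_cast hn
  have h1 : (n:ℝ) ≠ 0 := by linarith
  have h2 : (n:ℝ) - 1 ≠ 0 := by linarith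
  have h3 : ((Nat.factorial (n-2) : ℕ) : ℝ) ≠ 0 := by linarith
  rw [hfR]
  push_cast
  field_simp

end SKFinal

/-- Under the iterative Condorcet rule on the superman-kryptonite tournament, player 1
wins with probability 1/2 - 1/(n(n-1)) and player n with probability 2/(n(n-1)). -/
theorem stmt_8 (n : ℕ) (hn : 3 ≤ n) :
    icRule n (skT n) ⟨0, by omega⟩ = 1/2 - 1/((n:ℝ) * ((n:ℝ) - 1)) ∧
    icRule n (skT n) ⟨n - 1, by omega⟩ = 2/((n:ℝ) * ((n:ℝ) - 1)) := by
  exact ⟨final_z hn (w := ⟨n-1, by omega⟩) rfl rfl,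
    final_w hn (z := ⟨0, by omega⟩) rfl rfl⟩
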